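/- Let L = ⟨a,b,c,d,x⟩ with the Grigorchuk generators and the adding machine. Then the commutator subgroup γ₂(L) contains γ₂(L) × γ₂(L), i.e. for all g,h ∈ γ₂(L), the automorphism acting as g on the left subtree and h on the right subtree belongs to γ₂(L). -/

import Mathlib

namespace GrigTree

/-- Vertices of the rooted binary tree: finite binary strings. -/
abbrev V := List Bool

/-- The rooted automorphism `a`, swapping the two first-level subtrees. -/
def aFun : V → V
  | [] => []
  | i :: w => (!i) :: w

lemma aFun_invol : ∀ w, aFun (aFun w) = w
  | [] => rfl
  | _ :: _ => by simp [aFun]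

/-- The automorphism `a` as a permutation. -/
def a : Equiv.Perm V := ⟨aFun, aFun, aFun_invol, aFun_invol⟩

/-- The adding machine `x = (1, x)a`. -/
def xFun : V → V
  | [] => []
  | false :: w => true :: w
  | true :: w => false :: xFun w

def xInvFun : V → V
  | [] => []
  | true :: w => false :: w
  | false :: w => true :: xInvFun w

lemma x_left_inv : ∀ w, xInvFun (xFun w) = w
  | [] => rfl
  | false :: _ => rfl
  | true :: w => by simp [xFun, xInvFun, x_left_inv w]

lemma x_right_inv : ∀ w, xFun (xInvFun w) = w
  | [] => rfl
  | true :: _ => rfl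
  | false :: w => by simp [xFun, xInvFun, x_right_inv w]

/-- The adding machine as a permutation of the tree. -/
def x : Equiv.Perm V := ⟨xFun, xInvFun, x_left_inv, x_right_inv⟩

/-- States of the Grigorchuk automaton (the nontrivial ones). -/
inductive St | b | c | d
  deriving DecidableEq

def nextSt : St → St
  | .b => .c
  | .c => .d
  | .d => .b

def usesA : St → Bool
  | .b => true
  | .c => true
  | .d => false

/-- The action of the Grigorchuk generators `b = (a,c)`, `c = (a,d)`, `d = (1,b)`. -/
def gFun : St → V → V
  | _, [] => []
  | s, false :: w => false :: (if usesA s then aFun w else w)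
  | s, true :: w => true :: gFun (nextSt s) w

lemma gFun_invol : ∀ (w : V) (s : St), gFun s (gFun s w) = w
  | [], _ => rfl
  | false :: w, s => by cases h : usesA s <;> simp [gFun, h, aFun_invol]
  | true :: w, s => by simp [gFun, gFun_invol w]

def gPerm (s : St) : Equiv.Perm V :=
  ⟨gFun s, gFun s, fun w => gFun_invol w s, fun w => gFun_invol w s⟩

/-- The Grigorchuk generator `b = (a, c)`. -/
def b : Equiv.Perm V := gPerm .b
/-- The Grigorchuk generator `c = (a, d)`. -/
def c : Equiv.Perm V := gPerm .c
/-- The Grigorchuk generator `d = (1, b)`. -/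
def d : Equiv.Perm V := gPerm .d

def pairFun (f g : V → V) : V → V
  | [] => []
  | false :: w => false :: f w
  | true :: w => true :: g w

/-- The automorphism `(f, g)` acting as `f` on the left subtree and as `g` on the
right subtree, fixing the first level. -/
def pair (f g : Equiv.Perm V) : Equiv.Perm V where
  toFun := pairFun f g
  invFun := pairFun f.symm g.symm
  left_inv := by rintro (_ | ⟨i, w⟩) <;> first | rfl | cases i <;> simp [pairFun]
  right_inv := by rintro (_ | ⟨i, w⟩) <;> first | rfl | cases i <;> simp [pairFun]

/-- The commutator `[u, v] = u⁻¹v⁻¹uv` of the paper.  Words of tree automorphisms in the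
paper are composed left-to-right, so the paper's word `u⁻¹v⁻¹uv` corresponds to the
permutation `v * u * v⁻¹ * u⁻¹` under the usual (right-to-left) composition of functions. -/
def pcomm (u v : Equiv.Perm V) : Equiv.Perm V := v * u * v⁻¹ * u⁻¹

/-- The conjugate `v⁻¹ u v` of the paper (left-to-right composition). -/
def pconj (u v : Equiv.Perm V) : Equiv.Perm V := v * u * v⁻¹


/-- The group `L = ⟨a, b, c, d, x⟩`. -/
def L : Subgroup (Equiv.Perm V) := Subgroup.closure {a, b, c, d, x}

section Aux

open Equiv Subgroup
open scoped commutatorElement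

lemma pair_mul (f g f' g' : Equiv.Perm V) :
    pair f g * pair f' g' = pair (f * f') (g * g') := by
  apply Equiv.ext
  intro w
  rcases w with _ | ⟨i, w⟩
  · rfl
  · cases i <;> simp [pair, pairFun, Equiv.Perm.mul_apply]

lemma pair_one : pair 1 1 = (1 : Equiv.Perm V) := by
  apply Equiv.ext
  intro w
  rcases w with _ | ⟨i, w⟩
  · rfl
  · cases i <;> simp [pair, pairFun]

lemma pair_inv (f g : Equiv.Perm V) : (pair f g)⁻¹ = pair f⁻¹ g⁻¹ := by
  apply inv_eq_of_mul_eq_one_right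
  rw [pair_mul, mul_inv_cancel, mul_inv_cancel, pair_one]

lemma a_mul_a : a * a = (1 : Equiv.Perm V) := by
  apply Equiv.ext
  intro w
  show a (a w) = w
  simp only [a, Equiv.coe_fn_mk]
  exact aFun_invol w

lemma a_inv : a⁻¹ = a := inv_eq_of_mul_eq_one_right a_mul_a

lemma b_mul_b : b * b = (1 : Equiv.Perm V) := by
  apply Equiv.ext
  intro w
  show b (b w) = w
  simp only [b, gPerm, Equiv.coe_fn_mk]
  exact gFun_invol w .b

lemma d_mul_d : d * d = (1 : Equiv.Perm V) := by
  apply Equiv.ext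
  intro w
  show d (d w) = w
  simp only [d, gPerm, Equiv.coe_fn_mk]
  exact gFun_invol w .d

lemma b_inv : b⁻¹ = b := inv_eq_of_mul_eq_one_right b_mul_b
lemma d_inv : d⁻¹ = d := inv_eq_of_mul_eq_one_right d_mul_d

lemma a_pair_a (f g : Equiv.Perm V) : a * pair f g * a = pair g f := by
  apply Equiv.ext
  intro w
  rcases w with _ | ⟨i, w⟩
  · rfl
  · cases i <;> simp [a, aFun, pair, pairFun, Equiv.Perm.mul_apply]

lemma b_def : b = pair a c := by
  apply Equiv.ext
  intro w
  rcases w with _ | ⟨i, w⟩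
  · rfl
  · cases i <;> rfl

lemma c_def : c = pair a d := by
  apply Equiv.ext
  intro w
  rcases w with _ | ⟨i, w⟩
  · rfl
  · cases i <;> rfl

lemma d_def : d = pair 1 b := by
  apply Equiv.ext
  intro w
  rcases w with _ | ⟨i, w⟩
  · rfl
  · cases i <;> rfl

lemma x_def : x = a * pair 1 x := by
  apply Equiv.ext
  intro w
  rcases w with _ | ⟨i, w⟩
  · rfl
  · cases i <;> rfl

lemma pair_one_x : pair 1 x = a * x := by
  conv_rhs => rw [x_def]
  rw [← mul_assoc, a_mul_a, one_mul]

lemma pair_x_one : pair x 1 = x * a := by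
  have h : x * a = a * pair 1 x * a := by rw [← x_def]
  rw [h, a_pair_a]

lemma pair_commElt (u v s t : Equiv.Perm V) :
    ⁅pair u v, pair s t⁆ = pair ⁅u, s⁆ ⁅v, t⁆ := by
  simp [commutatorElement_def, pair_inv, pair_mul]

/-- `pair · 1` as a monoid hom. -/
def leftHom : Equiv.Perm V →* Equiv.Perm V where
  toFun g := pair g 1
  map_one' := pair_one
  map_mul' g₁ g₂ := by rw [pair_mul, one_mul]

/-- `pair 1 ·` as a monoid hom. -/
def rightHom : Equiv.Perm V →* Equiv.Perm V where
  toFun g := pair 1 g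
  map_one' := pair_one
  map_mul' g₁ g₂ := by rw [pair_mul, one_mul]

end Aux

section Main

open Equiv Subgroup
open scoped commutatorElement

/-- The obstruction element `Z = (b, b) = [a,d]`. -/
def Zp : Equiv.Perm V := pair b b

/-- The dihedral subgroup `D = ⟨a, d⟩`. -/
def Dsub : Subgroup (Equiv.Perm V) := Subgroup.closure {a, d}

lemma aL : a ∈ L := Subgroup.subset_closure (by simp)
lemma bL : b ∈ L := Subgroup.subset_closure (by simp)
lemma cL : c ∈ L := Subgroup.subset_closure (by simp)
lemma dL : d ∈ L := Subgroup.subset_closure (by simp)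
lemma xL : x ∈ L := Subgroup.subset_closure (by simp)

lemma ada : a * d * a = pair b 1 := by
  rw [d_def, a_pair_a]

lemma comm_ad : ⁅a, d⁆ = Zp := by
  rw [commutatorElement_def, a_inv, d_inv, show a * d * a * d = (a * d * a) * d from rfl,
    ada]
  conv_lhs => rw [d_def]
  rw [pair_mul, one_mul, mul_one, Zp]

lemma comm_da : ⁅d, a⁆ = Zp := by
  rw [commutatorElement_def, a_inv, d_inv, mul_assoc, mul_assoc, ← mul_assoc a d a, ada]
  conv_lhs => rw [d_def]
  rw [pair_mul, one_mul, mul_one, Zp]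

lemma commL_le_L : ⁅L, L⁆ ≤ L := by
  rw [Subgroup.commutator_le]
  intro g hg h hh
  rw [commutatorElement_def]
  exact mul_mem (mul_mem (mul_mem hg hh) (inv_mem hg)) (inv_mem hh)

lemma conjL {g n : Equiv.Perm V} (hg : g ∈ L) (hn : n ∈ ⁅L, L⁆) :
    g * n * g⁻¹ ∈ ⁅L, L⁆ := by
  have e : g * n * g⁻¹ = ⁅g, n⁆ * n := by group
  rw [e]
  exact mul_mem (Subgroup.commutator_mem_commutator hg (commL_le_L hn)) hn

lemma commute_Zp {q : Equiv.Perm V} (hq : q ∈ Dsub) : Commute q Zp := by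
  induction hq using Subgroup.closure_induction with
  | mem s hs =>
    rcases hs with rfl | rfl
    · show a * Zp = Zp * a
      have h1 : a * Zp * a = Zp := by rw [Zp, a_pair_a]
      calc a * Zp = (a * Zp * a) * a := by rw [mul_assoc (a * Zp), a_mul_a, mul_one]
        _ = Zp * a := by rw [h1]
    · show d * Zp = Zp * d
      rw [Zp, d_def, pair_mul, pair_mul, one_mul, mul_one, b_mul_b]
  | one => exact Commute.one_left Zp
  | mul p q' _ _ hp hq' => exact hp.mul_left hq'
  | inv p _ hp => exact hp.inv_left

lemma conj_zpowers {q w : Equiv.Perm V} (hq : q ∈ Dsub) (hw : w ∈ Subgroup.zpowers Zp) :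
    q * w * q⁻¹ ∈ Subgroup.zpowers Zp := by
  obtain ⟨k, rfl⟩ := hw
  have hc : Commute q (Zp ^ k) := (commute_Zp hq).zpow_right k
  rw [hc.eq, mul_assoc, mul_inv_cancel, mul_one]
  exact zpow_mem (Subgroup.mem_zpowers Zp) k

lemma commD : ∀ q ∈ Dsub, ∀ r ∈ Dsub, ⁅q, r⁆ ∈ Subgroup.zpowers Zp := by
  intro q hq
  induction hq using Subgroup.closure_induction with
  | mem s hs =>
    intro r hr
    induction hr using Subgroup.closure_induction with
    | mem t ht =>
      rcases hs with rfl | rfl <;> rcases ht with rfl | rfl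
      · rw [commutatorElement_self]; exact one_mem _
      · rw [comm_ad]; exact Subgroup.mem_zpowers Zp
      · rw [comm_da]; exact Subgroup.mem_zpowers Zp
      · rw [commutatorElement_self]; exact one_mem _
    | one => rw [commutatorElement_one_right]; exact one_mem _
    | mul r₁ r₂ hr₁ hr₂ h1 h2 =>
      have e : ⁅s, r₁ * r₂⁆ = ⁅s, r₁⁆ * (r₁ * ⁅s, r₂⁆ * r₁⁻¹) := by group
      rw [e]
      exact mul_mem h1 (conj_zpowers hr₁ h2)
    | inv r hr h =>
      have e : ⁅s, r⁻¹⁆ = r⁻¹ * ⁅s, r⁆⁻¹ * (r⁻¹)⁻¹ := by group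
      rw [e]
      exact conj_zpowers (inv_mem hr) (inv_mem h)
  | one =>
    intro r hr
    rw [commutatorElement_one_left]; exact one_mem _
  | mul q₁ q₂ hq₁ hq₂ h1 h2 =>
    intro r hr
    have e : ⁅q₁ * q₂, r⁆ = (q₁ * ⁅q₂, r⁆ * q₁⁻¹) * ⁅q₁, r⁆ := by group
    rw [e]
    exact mul_mem (conj_zpowers hq₁ (h2 r hr)) (h1 r hr)
  | inv q hq h =>
    intro r hr
    have e : ⁅q⁻¹, r⁆ = q⁻¹ * ⁅q, r⁆⁻¹ * (q⁻¹)⁻¹ := by group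
    rw [e]
    exact conj_zpowers (inv_mem hq) (inv_mem (h r hr))

lemma pair_xa_d : pair (x * a) d = x * a * c := by
  have h : pair (x * a) d = pair x 1 * pair a d := by rw [pair_mul, one_mul]
  rw [h, pair_x_one, ← c_def]

lemma pair_d_a : pair d a = a * c * a := by
  rw [c_def, a_pair_a]

/-- The key witness: `(1, Z)` is a commutator of two elements of `L`. -/
lemma pair_one_Zp_mem : pair 1 Zp ∈ ⁅L, L⁆ := by
  have hcomm : ⁅x * a, d⁆ = 1 := by
    have h : (x * a) * d = d * (x * a) := by
      rw [← pair_x_one, d_def, pair_mul, pair_mul, one_mul, mul_one, one_mul, mul_one]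
    rw [commutatorElement_def, h]
    group
  have e : pair 1 Zp = ⁅pair (x * a) d, pair d a⁆ := by
    rw [pair_commElt, hcomm, comm_da]
  rw [e, pair_xa_d, pair_d_a]
  exact Subgroup.commutator_mem_commutator
    (mul_mem (mul_mem xL aL) cL) (mul_mem (mul_mem aL cL) aL)

lemma pair_zpow_one_mem {w : Equiv.Perm V} (hw : w ∈ Subgroup.zpowers Zp) :
    pair w 1 ∈ ⁅L, L⁆ := by
  obtain ⟨k, rfl⟩ := hw
  have h1 : pair Zp 1 ∈ ⁅L, L⁆ := by
    have h := conjL aL pair_one_Zp_mem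
    rwa [a_inv, a_pair_a] at h
  have e : pair (Zp ^ k) 1 = (pair Zp 1) ^ k := map_zpow leftHom Zp k
  rw [e]
  exact zpow_mem h1 k

/-- Every element of `L` lifts to an element `(q, g)` of `L` with `q ∈ D`. -/
lemma lift : ∀ g ∈ L, ∃ q ∈ Dsub, pair q g ∈ L := by
  intro g hg
  induction hg using Subgroup.closure_induction with
  | mem s hs =>
    simp only [Set.mem_insert_iff, Set.mem_singleton_iff] at hs
    rcases hs with rfl | rfl | rfl | rfl | rfl
    · exact ⟨d, Subgroup.subset_closure (by simp), by
        rw [show pair d a = a * c * a from pair_d_a]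
        exact mul_mem (mul_mem aL cL) aL⟩
    · exact ⟨1, one_mem _, by rw [← d_def]; exact dL⟩
    · exact ⟨a, Subgroup.subset_closure (by simp), by rw [← b_def]; exact bL⟩
    · exact ⟨a, Subgroup.subset_closure (by simp), by rw [← c_def]; exact cL⟩
    · exact ⟨1, one_mem _, by rw [pair_one_x]; exact mul_mem aL xL⟩
  | one => exact ⟨1, one_mem _, by rw [pair_one]; exact one_mem _⟩
  | mul g₁ g₂ hg₁ hg₂ h1 h2 =>
    obtain ⟨q₁, hq₁, hp₁⟩ := h1
    obtain ⟨q₂, hq₂, hp₂⟩ := h2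
    exact ⟨q₁ * q₂, mul_mem hq₁ hq₂, by rw [← pair_mul]; exact mul_mem hp₁ hp₂⟩
  | inv g₁ hg₁ h1 =>
    obtain ⟨q₁, hq₁, hp₁⟩ := h1
    exact ⟨q₁⁻¹, inv_mem hq₁, by rw [← pair_inv]; exact inv_mem hp₁⟩

lemma pair_one_comm_mem {g h : Equiv.Perm V} (hg : g ∈ L) (hh : h ∈ L) :
    pair 1 ⁅g, h⁆ ∈ ⁅L, L⁆ := by
  obtain ⟨q, hqD, hq⟩ := lift g hg
  obtain ⟨r, hrD, hr⟩ := lift h hh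
  have hc : pair ⁅q, r⁆ ⁅g, h⁆ ∈ ⁅L, L⁆ := by
    rw [← pair_commElt]
    exact Subgroup.commutator_mem_commutator hq hr
  have hz : ⁅q, r⁆⁻¹ ∈ Subgroup.zpowers Zp := inv_mem (commD q hqD r hrD)
  have e : pair 1 ⁅g, h⁆ = pair ⁅q, r⁆⁻¹ 1 * pair ⁅q, r⁆ ⁅g, h⁆ := by
    rw [pair_mul, inv_mul_cancel, one_mul]
  rw [e]
  exact mul_mem (pair_zpow_one_mem hz) hc

lemma pair_one_mem {h : Equiv.Perm V} (hh : h ∈ ⁅L, L⁆) : pair 1 h ∈ ⁅L, L⁆ := by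
  have hle : ⁅L, L⁆ ≤ Subgroup.comap rightHom ⁅L, L⁆ := by
    rw [Subgroup.commutator_le]
    intro g₁ h₁ g₂ h₂
    exact pair_one_comm_mem h₁ h₂
  exact hle hh

end Main

/-- Lemma 2.8: `γ₂(L) ⪰ γ₂(L) × γ₂(L)`: for all `g, h` in the commutator subgroup of
`L`, the automorphism acting as `g` on the left subtree and as `h` on the right
subtree belongs to the commutator subgroup of `L`. -/
theorem commutator_subgroup_contains_product :
    ∀ g h : Equiv.Perm V, g ∈ ⁅L, L⁆ → h ∈ ⁅L, L⁆ → pair g h ∈ ⁅L, L⁆ := by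
  intro g h hg hh
  have h2 : pair 1 h ∈ ⁅L, L⁆ := pair_one_mem hh
  have h1 : pair g 1 ∈ ⁅L, L⁆ := by
    have hc := conjL aL (pair_one_mem hg)
    rwa [a_inv, a_pair_a] at hc
  have e : pair g h = pair g 1 * pair 1 h := by rw [pair_mul, mul_one, one_mul]
  rw [e]
  exact mul_mem h1 h2

end GrigTree
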